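/- Let A be a q×q real matrix possessing a real eigenvalue b > 0 with b ≥ Re λ for every eigenvalue λ of A, and fix ω_0 > 0. Set ω_k := ω_0 + kb and F_{ℓ,n} := ∏_{ℓ ≤ k < n}(I + ω_k^{-1}A). Then there is a constant C (depending only on A and ω_0) such that for every eigenvalue λ of A and all integers 1 ≤ ℓ ≤ n, the operator norm satisfies ‖P_λ F_{ℓ,n}‖ ≤ C (n/ℓ)^{Re λ/b} (1 + log(n/ℓ))^{ν_λ}. -/

import Mathlib

open MeasureTheory ProbabilityTheory Filter Matrix Asymptotics
open scoped ENNReal NNReal Topology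

noncomputable section

namespace PolyaUrnPaper

/-- The state space of a `q`-colour urn: vectors in `ℝ^q` with the Euclidean norm. -/
abbrev E (q : ℕ) := EuclideanSpace ℝ (Fin q)

/-- The complexified state space `ℂ^q` with the Euclidean norm. -/
abbrev EC (q : ℕ) := EuclideanSpace ℂ (Fin q)

variable {q : ℕ}

/-- Total activity `a · x` of a composition vector `x`. -/
def totAct (a : Fin q → ℝ) (x : E q) : ℝ := ∑ i, a i * x i

/-- Coordinatewise complexification of a real vector. -/
def toC (x : E q) : EC q := WithLp.toLp 2 (fun i => (x i : ℂ))

variable {Ω : Type*} [MeasurableSpace Ω]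

/-- The σ-field `ℱ_n` generated by `X_1, …, X_n`. -/
def urnFiltration (X : ℕ → Ω → E q) (n : ℕ) : MeasurableSpace Ω :=
  ⨆ k ∈ Finset.Icc 1 n, MeasurableSpace.comap (X k) inferInstance

/-- The total activity process `S_n = a · X_n`. -/
def Sproc (a : Fin q → ℝ) (X : ℕ → Ω → E q) (n : ℕ) (ω : Ω) : ℝ := totAct a (X n ω)

/-- The increment `ΔX_n = X_{n+1} - X_n`. -/
def ΔX (X : ℕ → Ω → E q) (n : ℕ) (ω : Ω) : E q := X (n + 1) ω - X n ω

/-- The event `E_n^c` of non-extinction up to time `n`. -/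
def NE (a : Fin q → ℝ) (X : ℕ → Ω → E q) (n : ℕ) : Set Ω :=
  {ω | ∀ k ≤ n, 0 < Sproc a X k ω}

/-- The event of non-extinction (at all times). -/
def NEinf (a : Fin q → ℝ) (X : ℕ → Ω → E q) : Set Ω :=
  {ω | ∀ k, 0 < Sproc a X k ω}

/-- A generalized Pólya urn process: `P` is a probability measure, `a` the (nonnegative)
activity vector, `ξ i` the law of the replacement vector for colour `i`, `X₀` the non-random
initial composition with `a · X₀ > 0`, and `X` the urn process.  The `dynamics` field states
that conditionally on `ℱ_n`, on the event `S_n > 0` the increment `ΔX_n` is distributed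
as the mixture `∑ i (a_i X_{n,i}/S_n) ξ_i` (drawing colour `i` with probability
`a_i X_{n,i}/S_n` and then using law `ξ_i`, independently of the past), and `ΔX_n = 0`
on the event `S_n = 0`. -/
structure IsPolyaUrn (P : Measure Ω) (a : Fin q → ℝ) (ξ : Fin q → Measure (E q))
    (X₀ : E q) (X : ℕ → Ω → E q) : Prop where
  probP : IsProbabilityMeasure P
  probξ : ∀ i, IsProbabilityMeasure (ξ i)
  ha : ∀ i, 0 ≤ a i
  hX₀nonneg : ∀ i, 0 ≤ X₀ i
  haX₀ : 0 < totAct a X₀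
  hX0 : ∀ ω, X 0 ω = X₀
  measX : ∀ n, Measurable (X n)
  dynamics : ∀ n, ∀ B : Set (E q), MeasurableSet B →
    ∀ᵐ ω ∂P,
      (P[fun ω' => B.indicator (fun _ => (1 : ℝ)) (ΔX X n ω') | urnFiltration X n]) ω =
        if 0 < Sproc a X n ω then
          ∑ i, (a i * X n ω i / Sproc a X n ω) * (ξ i B).toReal
        else B.indicator (fun _ => (1 : ℝ)) 0

/-- Tenability: almost surely all coordinates of `X_n` are nonnegative for all `n`. -/
def Tenable (P : Measure Ω) (X : ℕ → Ω → E q) : Prop :=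
  ∀ n, ∀ᵐ ω ∂P, ∀ i, 0 ≤ X n ω i

/-- The urn is balanced in expectation with constant `b`:
`a · E ξ_i = b` for every colour `i` with positive activity. -/
def BalancedInExp (a : Fin q → ℝ) (ξ : Fin q → Measure (E q)) (b : ℝ) : Prop :=
  ∀ i, 0 < a i → ∫ x, totAct a x ∂(ξ i) = b

/-- The intensity matrix `A = (a_j E ξ_{j,i})_{i,j}`. -/
def intensity (a : Fin q → ℝ) (ξ : Fin q → Measure (E q)) : Matrix (Fin q) (Fin q) ℝ :=
  Matrix.of fun i j => a j * ∫ x, x i ∂(ξ j)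

/-- The intensity matrix viewed as a complex matrix. -/
def intensityC (a : Fin q → ℝ) (ξ : Fin q → Measure (E q)) : Matrix (Fin q) (Fin q) ℂ :=
  (intensity a ξ).map Complex.ofReal

/-- The largest eigenvalue `λ₁` of `A` equals `b`: `b` is an eigenvalue and it dominates
the real parts of all eigenvalues. -/
def LambdaOneIs (A : Matrix (Fin q) (Fin q) ℂ) (b : ℝ) : Prop :=
  (b : ℂ) ∈ spectrum ℂ A ∧ ∀ μ ∈ spectrum ℂ A, μ.re ≤ b

/-- Condition `U(p)`: the urn is tenable and balanced in expectation with `λ₁ = b > 0`,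
and `E|ξ_i|^p < ∞` for all colours `i`. -/
def CondU (P : Measure Ω) (a : Fin q → ℝ) (ξ : Fin q → Measure (E q))
    (X₀ : E q) (X : ℕ → Ω → E q) (b : ℝ) (p : ℝ) : Prop :=
  IsPolyaUrn P a ξ X₀ X ∧ Tenable P X ∧ BalancedInExp a ξ b ∧ 0 < b ∧
    LambdaOneIs (intensityC a ξ) b ∧
    ∀ i, ∫⁻ x, (‖x‖₊ : ℝ≥0∞) ^ p ∂(ξ i) < ∞

/-- `Re λ₂`: the largest real part among the eigenvalues of `A` (counted with algebraic
multiplicity) after removing one copy of `λ₁ = b`. -/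
def secondRe (A : Matrix (Fin q) (Fin q) ℂ) (b : ℝ) : ℝ :=
  letI : DecidableEq ℂ := Classical.decEq ℂ
  sSup (Complex.re '' {μ : ℂ | μ ∈ A.charpoly.roots.erase (b : ℂ)})

/-- `ν_λ`: one less than the size of the largest Jordan block of `A` for `λ`, i.e. the least
`m` such that `ker (A - λ)^{m+1} = ker (A - λ)^{m+2}`. -/
def nuOf (A : Matrix (Fin q) (Fin q) ℂ) (μ : ℂ) : ℕ :=
  sInf {m : ℕ | LinearMap.ker (Matrix.mulVecLin ((A - μ • 1) ^ (m + 1))) =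
      LinearMap.ker (Matrix.mulVecLin ((A - μ • 1) ^ (m + 2)))}

/-- `ν₂ = ν_{λ₂}`: the largest `ν_μ` among remaining eigenvalues `μ` with `Re μ = Re λ₂`. -/
def secondNu (A : Matrix (Fin q) (Fin q) ℂ) (b : ℝ) : ℕ :=
  letI : DecidableEq ℂ := Classical.decEq ℂ
  sSup (nuOf A '' {μ : ℂ | μ ∈ A.charpoly.roots.erase (b : ℂ) ∧ μ.re = secondRe A b})

/-- The generalized eigenspace of a matrix `A` for `μ`, i.e. `ker (A - μ I)^q`. -/
def genEig (A : Matrix (Fin q) (Fin q) ℂ) (μ : ℂ) : Submodule ℂ (Fin q → ℂ) :=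
  LinearMap.ker (Matrix.mulVecLin ((A - μ • 1) ^ q))

/-- `Pm` is the spectral projection of `A` for the eigenvalue `μ`: the projection onto the
generalized eigenspace of `μ` along the sum of the generalized eigenspaces of the other
eigenvalues. -/
def IsSpectralProjection (A : Matrix (Fin q) (Fin q) ℂ) (μ : ℂ)
    (Pm : Matrix (Fin q) (Fin q) ℂ) : Prop :=
  Pm * Pm = Pm ∧
    LinearMap.range Pm.mulVecLin = genEig A μ ∧
    LinearMap.ker Pm.mulVecLin = ⨆ ν ∈ spectrum ℂ A \ {μ}, genEig A ν

/-- `ω_n = a·X₀ + n b`, the conditional expectation of the total activity. -/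
def omegaSeq (a : Fin q → ℝ) (X₀ : E q) (b : ℝ) (n : ℕ) : ℝ := totAct a X₀ + n * b

/-- The matrix product `F_{ℓ,n} = ∏_{ℓ ≤ k < n} (I + ω_k⁻¹ A)` (complex version). -/
def FprodC (A : Matrix (Fin q) (Fin q) ℂ) (w : ℕ → ℝ) (l n : ℕ) : Matrix (Fin q) (Fin q) ℂ :=
  (((List.range' l (n - l)).map fun k =>
      (1 : Matrix (Fin q) (Fin q) ℂ) + ((w k : ℂ))⁻¹ • A)).prod

/-- The matrix product `F_{ℓ,n} = ∏_{ℓ ≤ k < n} (I + ω_k⁻¹ A)` (real version). -/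
def FprodR (A : Matrix (Fin q) (Fin q) ℝ) (w : ℕ → ℝ) (l n : ℕ) : Matrix (Fin q) (Fin q) ℝ :=
  (((List.range' l (n - l)).map fun k =>
      (1 : Matrix (Fin q) (Fin q) ℝ) + (w k)⁻¹ • A)).prod

/-- The operator norm (w.r.t. Euclidean norms) of a complex matrix. -/
def opNorm (M : Matrix (Fin q) (Fin q) ℂ) : ℝ :=
  ‖LinearMap.toContinuousLinearMap (Matrix.toEuclideanLin M)‖

/-- The conditional expectation `E[X_n | E_n^c]` of the urn composition given
non-extinction up to time `n`. -/
def condMean (P : Measure Ω) (a : Fin q → ℝ) (X : ℕ → Ω → E q) (n : ℕ) : E q :=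
  ∫ ω, X n ω ∂(P[|NE a X n])

/-- The martingale difference part `Y_n = ΔX_{n-1} - E[ΔX_{n-1} | ℱ_{n-1}]`. -/
def Yseq (P : Measure Ω) (X : ℕ → Ω → E q) (n : ℕ) (ω : Ω) : E q :=
  ΔX X (n - 1) ω - (P[ΔX X (n - 1) | urnFiltration X (n - 1)]) ω

/-- The noise part `Z_n = ((ω_{n-1} - S_{n-1})/ω_{n-1}) E[ΔX_{n-1} | ℱ_{n-1}]`. -/
def Zseq (P : Measure Ω) (a : Fin q → ℝ) (X₀ : E q) (b : ℝ) (X : ℕ → Ω → E q)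
    (n : ℕ) (ω : Ω) : E q :=
  ((omegaSeq a X₀ b (n - 1) - Sproc a X (n - 1) ω) / omegaSeq a X₀ b (n - 1)) •
    (P[ΔX X (n - 1) | urnFiltration X (n - 1)]) ω

/-- `(Y_n)_{n ≥ 1}` is a martingale difference sequence for the filtration `ℱ`. -/
def IsMDSeq {V : Type*} [NormedAddCommGroup V] [NormedSpace ℝ V] [CompleteSpace V]
    (P : Measure Ω) (ℱ : ℕ → MeasurableSpace Ω) (Y : ℕ → Ω → V) : Prop :=
  ∀ n, 1 ≤ n → Integrable (Y n) P ∧ StronglyMeasurable[ℱ n] (Y n) ∧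
    P[Y n | ℱ (n - 1)] =ᵐ[P] 0

/-- `G` is a centered Gaussian measure on `ℝ^q` with covariance matrix `Sig`,
characterized through its characteristic function. -/
def IsCenteredGaussianWithCov (Sig : Matrix (Fin q) (Fin q) ℝ) (G : Measure (E q)) : Prop :=
  IsProbabilityMeasure G ∧
    ∀ t : E q, ∫ x, Complex.exp (Complex.I * ((∑ i, t i * x i : ℝ) : ℂ)) ∂G =
      Complex.exp (-(1 / 2 : ℂ) * ((∑ i, ∑ j, t i * Sig i j * t j : ℝ) : ℂ))

/-- Convergence in distribution of a sequence of (probability) measures on `ℝ^q`: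
integrals of every bounded continuous function converge. -/
def TendstoInDistribution (μs : ℕ → Measure (E q)) (G : Measure (E q)) : Prop :=
  ∀ f : BoundedContinuousFunction (E q) ℝ,
    Tendsto (fun n => ∫ x, f x ∂(μs n)) atTop (𝓝 (∫ x, f x ∂G))


/-- Multiplication of a real matrix with a vector in `ℝ^q` (Euclidean). -/
def mulVecE {q : ℕ} (M : Matrix (Fin q) (Fin q) ℝ) (v : E q) : E q :=
  WithLp.toLp 2 (fun i => ∑ j, M i j * v j)

/-- Multiplication of a complex matrix with a vector in `ℂ^q` (Euclidean). -/
def mulVecEC {q : ℕ} (M : Matrix (Fin q) (Fin q) ℂ) (v : EC q) : EC q :=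
  WithLp.toLp 2 (fun i => ∑ j, M i j * v j)

/-- The algebraic multiplicity of `μ` as an eigenvalue of `A` (as a root of the
characteristic polynomial). -/
def algMult {q : ℕ} (A : Matrix (Fin q) (Fin q) ℂ) (μ : ℂ) : ℕ :=
  letI : DecidableEq ℂ := Classical.decEq ℂ
  A.charpoly.roots.count μ

end PolyaUrnPaper



open PolyaUrnPaper MeasureTheory Matrix


namespace Lem61
open PolyaUrnPaper Matrix
open scoped Matrix.Norms.L2Operator
variable {q : ℕ}

lemma opNorm_eq (M : Matrix (Fin q) (Fin q) ℂ) : opNorm M = ‖M‖ := by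
  rw [Matrix.l2_opNorm_def]; rfl


lemma mulVecLin_inj : Function.Injective
    (Matrix.mulVecLin : Matrix (Fin q) (Fin q) ℂ → _) := by
  intro M N h
  apply Matrix.toLin'.injective
  rw [Matrix.toLin'_apply', Matrix.toLin'_apply', h]

lemma mulVecLin_pow (M : Matrix (Fin q) (Fin q) ℂ) (k : ℕ) :
    (M ^ k).mulVecLin = (M.mulVecLin) ^ k := by
  induction k with
  | zero => simp [Matrix.mulVecLin_one]; rfl
  | succ k ih => rw [pow_succ, pow_succ, Matrix.mulVecLin_mul, ih]; rfl

lemma genEig_invariant (A : Matrix (Fin q) (Fin q) ℂ) (μ : ℂ) {x : Fin q → ℂ}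
    (hx : x ∈ genEig A μ) : A.mulVecLin x ∈ genEig A μ := by
  have hc : Commute A ((A - μ • 1) ^ q) :=
    (((Commute.refl A).sub_right ((Commute.one_right A).smul_right μ))).pow_right q
  have : ((A - μ • 1) ^ q * A).mulVecLin x = (A * (A - μ • 1) ^ q).mulVecLin x := by
    rw [hc.eq]
  rw [Matrix.mulVecLin_mul, Matrix.mulVecLin_mul] at this
  simp only [LinearMap.comp_apply] at this
  have hx0 : ((A - μ • 1) ^ q).mulVecLin x = 0 := hx
  simp only [genEig, LinearMap.mem_ker]
  rw [this, hx0, map_zero]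

lemma ker_invariant (A : Matrix (Fin q) (Fin q) ℂ) (μ : ℂ) :
    Submodule.map A.mulVecLin (⨆ ν ∈ spectrum ℂ A \ {μ}, genEig A ν) ≤
      ⨆ ν ∈ spectrum ℂ A \ {μ}, genEig A ν := by
  rw [Submodule.map_iSup]
  apply iSup_le
  intro ν
  rw [Submodule.map_iSup]
  apply iSup_le
  intro hν
  refine le_trans ?_ (le_iSup₂ (f := fun ν _ => genEig A ν) ν hν)
  rintro y ⟨x, hx, rfl⟩
  exact genEig_invariant A ν hx

lemma proj_comm {A P : Matrix (Fin q) (Fin q) ℂ} {μ : ℂ}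
    (hP : IsSpectralProjection A μ P) : P * A = A * P := by
  obtain ⟨hidem, hran, hker⟩ := hP
  apply mulVecLin_inj
  rw [Matrix.mulVecLin_mul, Matrix.mulVecLin_mul]
  set p := P.mulVecLin
  set a := A.mulVecLin
  have hpp : ∀ y, p (p y) = p y := by
    intro y
    have : (P * P).mulVecLin y = P.mulVecLin y := by rw [hidem]
    rw [Matrix.mulVecLin_mul] at this
    exact this
  refine LinearMap.ext fun x => ?_
  simp only [LinearMap.comp_apply]
  -- p (a x) = a (p x)
  have h1 : p (a (p x)) = a (p x) := by
    have hmem : a (p x) ∈ LinearMap.range p := by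
      rw [hran]
      exact genEig_invariant A μ (hran ▸ LinearMap.mem_range_self p x)
    obtain ⟨y, hy⟩ := hmem
    rw [← hy, hpp]
  have h2 : p (a (x - p x)) = 0 := by
    have hmem : x - p x ∈ LinearMap.ker p := by
      simp only [LinearMap.mem_ker, map_sub]
      rw [hpp x]; exact sub_self _
    have : a (x - p x) ∈ LinearMap.ker p := by
      rw [hker] at hmem ⊢
      exact ker_invariant A μ ⟨x - p x, hmem, rfl⟩
    exact this
  have hsplit : p x + (x - p x) = x := by abel
  have : p (a x) = p (a (p x)) + p (a (x - p x)) := by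
    conv_lhs => rw [← hsplit]
    rw [map_add, map_add]
  rw [this, h2, add_zero, h1]

lemma nil_of_proj {A P : Matrix (Fin q) (Fin q) ℂ} {μ : ℂ}
    (hP : IsSpectralProjection A μ P) :
    (A - μ • 1) ^ (nuOf A μ + 1) * P = 0 := by
  obtain ⟨hidem, hran, hker⟩ := hP
  set f := (A - μ • 1).mulVecLin with hf
  have hpow : ∀ k : ℕ, ((A - μ • 1) ^ k).mulVecLin = f ^ k := fun k => mulVecLin_pow _ k
  set s : Set ℕ := {m : ℕ | LinearMap.ker (Matrix.mulVecLin ((A - μ • 1) ^ (m + 1))) =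
      LinearMap.ker (Matrix.mulVecLin ((A - μ • 1) ^ (m + 2)))} with hs
  have hs' : s = {m : ℕ | LinearMap.ker (f ^ (m + 1)) = LinearMap.ker (f ^ (m + 2))} := by
    simp only [hs, hpow]
  have hne : s.Nonempty := by
    obtain ⟨k, hk_le, hk⟩ := Module.End.exists_ker_pow_eq_ker_pow_succ f
    refine ⟨k, ?_⟩
    rw [hs']
    have h1 := Module.End.ker_pow_constant hk 1
    have h2 := Module.End.ker_pow_constant hk 2
    simp only [Set.mem_setOf_eq]
    rw [← h1, ← h2]
  have hmem : nuOf A μ ∈ s := Nat.sInf_mem hne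
  set ν := nuOf A μ
  have hstab : LinearMap.ker (f ^ (ν + 1)) = LinearMap.ker (f ^ (ν + 2)) := by
    rw [hs'] at hmem; exact hmem
  -- ker f^q ≤ ker f^{ν+1}
  have hle : LinearMap.ker (f ^ q) ≤ LinearMap.ker (f ^ (ν + 1)) := by
    rcases le_total q (ν + 1) with h | h
    · obtain ⟨m, hm⟩ := Nat.exists_eq_add_of_le h
      rw [hm, add_comm q m, pow_add]
      exact LinearMap.ker_le_ker_comp _ _
    · have := Module.End.ker_pow_constant hstab (q - (ν + 1))
      rw [Nat.add_sub_cancel' h] at this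
      rw [← this]
  -- conclude
  apply mulVecLin_inj
  rw [Matrix.mulVecLin_mul, Matrix.mulVecLin_zero]
  refine LinearMap.ext fun x => ?_
  simp only [LinearMap.comp_apply, LinearMap.zero_apply]
  have hx : P.mulVecLin x ∈ LinearMap.ker (f ^ (ν + 1)) := by
    apply hle
    have : P.mulVecLin x ∈ genEig A μ := hran ▸ LinearMap.mem_range_self _ x
    rw [genEig] at this
    rw [← hpow q] at *
    exact this
  rw [hpow]
  exact LinearMap.mem_ker.mp hx

lemma proj_unique {A P P' : Matrix (Fin q) (Fin q) ℂ} {μ : ℂ}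
    (hP : IsSpectralProjection A μ P) (hP' : IsSpectralProjection A μ P') : P = P' := by
  obtain ⟨hidem, hran, hker⟩ := hP
  obtain ⟨hidem', hran', hker'⟩ := hP'
  apply mulVecLin_inj
  set p := P.mulVecLin
  set p' := P'.mulVecLin
  have hpp : ∀ y, p (p y) = p y := by
    intro y
    have : (P * P).mulVecLin y = P.mulVecLin y := by rw [hidem]
    rw [Matrix.mulVecLin_mul] at this; exact this
  have hpp' : ∀ y, p' (p' y) = p' y := by
    intro y
    have : (P' * P').mulVecLin y = P'.mulVecLin y := by rw [hidem']
    rw [Matrix.mulVecLin_mul] at this; exact this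
  refine LinearMap.ext fun x => ?_
  have h1 : p (p' x) = p' x := by
    have : p' x ∈ LinearMap.range p := by
      rw [hran, ← hran']; exact LinearMap.mem_range_self _ x
    obtain ⟨y, hy⟩ := this
    rw [← hy, hpp]
  have h2 : p (x - p' x) = 0 := by
    have : x - p' x ∈ LinearMap.ker p := by
      rw [hker, ← hker']
      simp only [LinearMap.mem_ker, map_sub]
      rw [hpp' x]; exact sub_self _
    exact this
  have hsplit : p' x + (x - p' x) = x := by abel
  have : p x = p (p' x) + p (x - p' x) := by
    conv_lhs => rw [← hsplit]
    rw [map_add]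
  rw [this, h1, h2, add_zero]


lemma abs_one_add_le (z : ℂ) : ‖1 + z‖ ≤ Real.exp (z.re + ‖z‖ ^ 2 / 2) := by
  have h1 : ‖1 + z‖ ^ 2 = 1 + (2 * z.re + ‖z‖ ^ 2) := by
    rw [Complex.sq_norm, Complex.normSq_add, Complex.normSq_one]
    simp [Complex.normSq_eq_norm_sq]
    ring
  have h2 : ‖1 + z‖ ^ 2 ≤ Real.exp (z.re + ‖z‖ ^ 2 / 2) ^ 2 := by
    rw [h1, ← Real.exp_nat_mul]
    calc 1 + (2 * z.re + ‖z‖ ^ 2) ≤ Real.exp (2 * z.re + ‖z‖ ^ 2) := by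
          linarith [Real.add_one_le_exp (2 * z.re + ‖z‖ ^ 2)]
      _ = Real.exp ((2:ℕ) * (z.re + ‖z‖ ^ 2 / 2)) := by ring_nf
  exact (pow_le_pow_iff_left₀ (norm_nonneg _) (Real.exp_pos _).le two_ne_zero).mp h2

lemma sum_inv_le (c : ℝ) (hc : 0 < c) {l n : ℕ} (hl : 1 ≤ l) (hln : l ≤ n) :
    ∑ k ∈ Finset.Ico l n, ((k : ℝ) + c)⁻¹ ≤
      Real.log ((n : ℝ) - 1 + c) - Real.log ((l : ℝ) - 1 + c) := by
  induction n, hln using Nat.le_induction with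
  | base => simp
  | succ n hln ih =>
      rw [Finset.sum_Ico_succ_top hln]
      have hn1 : (1:ℝ) ≤ (n:ℝ) := by exact_mod_cast hl.trans hln
      have hp1 : (0:ℝ) < (n:ℝ) - 1 + c := by linarith
      have hp2 : (0:ℝ) < (n:ℝ) + c := by linarith
      have hlog : ((n:ℝ) + c)⁻¹ ≤ Real.log ((n:ℝ) + c) - Real.log ((n:ℝ) - 1 + c) := by
        have := Real.log_le_sub_one_of_pos (x := ((n:ℝ) - 1 + c) / ((n:ℝ) + c)) (by positivity)
        rw [Real.log_div (by linarith) (by linarith)] at this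
        have hq : ((n:ℝ) - 1 + c) / ((n:ℝ) + c) - 1 = -(((n:ℝ) + c)⁻¹) := by
          field_simp
          ring
        rw [hq] at this
        linarith
      have hcast : ((n:ℝ) + 1) - 1 + c = (n:ℝ) + c := by ring
      push_cast
      rw [hcast]
      linarith
  
lemma le_sum_inv (c : ℝ) (hc : 0 < c) {l n : ℕ} (hl : 1 ≤ l) (hln : l ≤ n) :
    Real.log ((n : ℝ) + c) - Real.log ((l : ℝ) + c) ≤
      ∑ k ∈ Finset.Ico l n, ((k : ℝ) + c)⁻¹ := by
  induction n, hln using Nat.le_induction with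
  | base => simp
  | succ n hln ih =>
      rw [Finset.sum_Ico_succ_top hln]
      have hn1 : (1:ℝ) ≤ (n:ℝ) := by exact_mod_cast hl.trans hln
      have hp2 : (0:ℝ) < (n:ℝ) + c := by linarith
      have hlog : Real.log ((n:ℝ) + 1 + c) - Real.log ((n:ℝ) + c) ≤ ((n:ℝ) + c)⁻¹ := by
        have := Real.log_le_sub_one_of_pos (x := ((n:ℝ) + 1 + c) / ((n:ℝ) + c)) (by positivity)
        rw [Real.log_div (by linarith) (by linarith)] at this
        have hq : ((n:ℝ) + 1 + c) / ((n:ℝ) + c) - 1 = ((n:ℝ) + c)⁻¹ := by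
          field_simp
          ring
        rw [hq] at this
        linarith
      push_cast
      linarith

lemma sum_inv_sq_le (c : ℝ) (hc : 0 < c) {l n : ℕ} (hl : 1 ≤ l) (hln : l ≤ n) :
    ∑ k ∈ Finset.Ico l n, (((k : ℝ) + c)⁻¹) ^ 2 ≤ 2 := by
  have key : ∑ k ∈ Finset.Ico l n, (((k : ℝ) + c)⁻¹) ^ 2 ≤
      2 * (((l:ℝ))⁻¹ - ((n:ℝ))⁻¹) := by
    induction n, hln using Nat.le_induction with
    | base => simp
    | succ n hln ih =>
        rw [Finset.sum_Ico_succ_top hln]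
        have hn1 : (1:ℝ) ≤ (n:ℝ) := by exact_mod_cast hl.trans hln
        have hstep : (((n:ℝ) + c)⁻¹) ^ 2 ≤ 2 * (((n:ℝ))⁻¹ - ((n:ℝ)+1)⁻¹) := by
          have h1 : (0:ℝ) < (n:ℝ) := by linarith
          have h4 : 2 * (((n:ℝ))⁻¹ - ((n:ℝ)+1)⁻¹) = 2 / ((n:ℝ) * ((n:ℝ)+1)) := by
            field_simp
            ring
          rw [h4, inv_pow, inv_eq_one_div, div_le_div_iff₀ (by positivity) (by positivity)]
          nlinarith [hc.le, hn1, sq_nonneg c, mul_pos h1 h1]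
        push_cast
        linarith
  have hl1 : (0:ℝ) < (l:ℝ) := by exact_mod_cast hl
  have hn0 : (0:ℝ) ≤ ((n:ℝ))⁻¹ := by positivity
  have : ((l:ℝ))⁻¹ ≤ 1 := by
    rw [inv_le_one_iff₀]
    right; exact_mod_cast hl
  linarith


lemma Fprod_succ (A : Matrix (Fin q) (Fin q) ℂ) (w : ℕ → ℝ) {l n : ℕ} (hln : l ≤ n) :
    FprodC A w l (n + 1) = FprodC A w l n * ((1 : Matrix (Fin q) (Fin q) ℂ) + ((w n : ℂ))⁻¹ • A) := by
  unfold FprodC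
  have h1 : n + 1 - l = (n - l) + 1 := by omega
  have h3 : l + (n - l) = n := by omega
  have h2 : List.range' l ((n - l) + 1) = List.range' l (n - l) ++ [n] := by
    rw [← List.range'_append_1 (s := l) (m := n - l) (n := 1), h3]
    rfl
  rw [h1, h2]
  rw [List.map_append, List.prod_append]
  simp

lemma key_repr (A P : Matrix (Fin q) (Fin q) ℂ) (μ : ℂ) (ν : ℕ)
    (hcomm : P * A = A * P) (hnil : (A - μ • 1) ^ (ν + 1) * P = 0)
    (w : ℕ → ℝ) (hw : ∀ k, 0 < w k) (γ : ℕ → ℝ) (hγ : ∀ k, 0 < γ k)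
    (hcγ : ∀ k, ‖1 + ((w k : ℂ))⁻¹ * μ‖ ≤ γ k)
    (κ : ℝ) (hκγ : ∀ k, 1 ≤ κ * γ k) (hκ : 1 ≤ κ)
    (l : ℕ) :
    ∀ n, l ≤ n → ∃ e : ℕ → ℂ,
      P * FprodC A w l n =
        ∑ j ∈ Finset.range (ν + 1), e j • ((A - μ • 1) ^ j * P) ∧
      ∀ j, ‖e j‖ ≤
        κ ^ j * (∑ k ∈ Finset.Ico l n, (w k)⁻¹) ^ j * ∏ k ∈ Finset.Ico l n, γ k := by
  have hcommM : P * (A - μ • 1) = (A - μ • 1) * P := by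
    rw [mul_sub, sub_mul, hcomm, mul_smul_comm, smul_mul_assoc, mul_one, one_mul]
  have hMjP : ∀ j : ℕ, ((A - μ • 1) ^ j * P) * (A - μ • 1) = (A - μ • 1) ^ (j + 1) * P := by
    intro j
    rw [mul_assoc, hcommM, ← mul_assoc, ← pow_succ]
  intro n hn
  induction n, hn using Nat.le_induction with
  | base =>
      refine ⟨fun j => if j = 0 then 1 else 0, ?_, ?_⟩
      · have : FprodC A w l l = 1 := by simp [FprodC]
        rw [this, mul_one]
        rw [Finset.sum_eq_single 0]
        · simp
        · intro j _ hj; simp [hj]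
        · intro h; exact absurd (Finset.mem_range.mpr (Nat.succ_pos ν)) h
      · intro j
        simp only [Finset.Ico_self, Finset.sum_empty, Finset.prod_empty, mul_one]
        cases j with
        | zero => simp
        | succ m => simp [Nat.succ_ne_zero]
  | succ n hln ih =>
      obtain ⟨e, hrep, hbd⟩ := ih
      set c : ℂ := 1 + ((w n : ℂ))⁻¹ * μ with hc
      set d : ℂ := ((w n : ℂ))⁻¹ with hd
      refine ⟨fun j => c * e j + if j = 0 then 0 else d * e (j - 1), ?_, ?_⟩
      · rw [Fprod_succ A w hln, ← mul_assoc, hrep]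
        have hfac : (1 : Matrix (Fin q) (Fin q) ℂ) + ((w n : ℂ))⁻¹ • A
            = c • 1 + d • (A - μ • 1) := by
          rw [hc, hd]
          module
        rw [hfac]
        rw [Finset.sum_mul]
        have hterm : ∀ j, (e j • ((A - μ • 1) ^ j * P)) * (c • 1 + d • (A - μ • 1))
            = (c * e j) • ((A - μ • 1) ^ j * P) + (d * e j) • ((A - μ • 1) ^ (j + 1) * P) := by
          intro j
          rw [mul_add, mul_smul_comm, mul_smul_comm, mul_one, smul_mul_assoc, hMjP j,
            smul_smul, smul_smul]
        simp only [hterm]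
        rw [Finset.sum_add_distrib]
        have hshift : ∑ j ∈ Finset.range (ν + 1),
            (if j = 0 then (0:ℂ) else d * e (j - 1)) • ((A - μ • 1) ^ j * P)
            = ∑ j ∈ Finset.range (ν + 1), (d * e j) • ((A - μ • 1) ^ (j + 1) * P) := by
          rw [Finset.sum_range_succ' (fun j => (if j = 0 then (0:ℂ) else d * e (j - 1)) • ((A - μ • 1) ^ j * P)) ν,
            Finset.sum_range_succ (fun j => (d * e j) • ((A - μ • 1) ^ (j + 1) * P)) ν,
            hnil, smul_zero, add_zero]
          simp
        rw [← hshift]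
        rw [← Finset.sum_add_distrib]
        apply Finset.sum_congr rfl
        intro j _
        rw [← add_smul]
      · intro j
        have hκpos : (0:ℝ) < κ := lt_of_lt_of_le one_pos hκ
        have hD : (0:ℝ) ≤ ∑ k ∈ Finset.Ico l n, (w k)⁻¹ :=
          Finset.sum_nonneg fun k _ => (inv_nonneg).mpr (hw k).le
        have hΓ : (0:ℝ) < ∏ k ∈ Finset.Ico l n, γ k :=
          Finset.prod_pos fun k _ => hγ k
        have hdR : (0:ℝ) ≤ (w n)⁻¹ := (inv_nonneg).mpr (hw n).le
        have hsum : ∑ k ∈ Finset.Ico l (n+1), (w k)⁻¹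
            = (∑ k ∈ Finset.Ico l n, (w k)⁻¹) + (w n)⁻¹ := Finset.sum_Ico_succ_top hln _
        have hprodγ : ∏ k ∈ Finset.Ico l (n+1), γ k
            = (∏ k ∈ Finset.Ico l n, γ k) * γ n := Finset.prod_Ico_succ_top hln _
        set D := ∑ k ∈ Finset.Ico l n, (w k)⁻¹
        set Γ := ∏ k ∈ Finset.Ico l n, γ k
        rw [hsum, hprodγ]
        have habs_d : ‖d‖ = (w n)⁻¹ := by
          rw [hd, ← Complex.ofReal_inv, Complex.norm_real, Real.norm_eq_abs, abs_of_nonneg hdR]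
        cases j with
        | zero =>
            have h0 : (c * e 0 + if (0:ℕ) = 0 then 0 else d * e (0 - 1)) = c * e 0 := by simp
            beta_reduce
            rw [h0, norm_mul, pow_zero, pow_zero, one_mul, one_mul]
            calc ‖c‖ * ‖e 0‖
                ≤ γ n * Γ := by
                  apply mul_le_mul (hcγ n) ?_ (norm_nonneg _) (hγ n).le
                  simpa using hbd 0
              _ = Γ * γ n := mul_comm _ _
        | succ m =>
            have hm : (c * e (m+1) + if m + 1 = 0 then 0 else d * e (m + 1 - 1))
                = c * e (m+1) + d * e m := by simp
            beta_reduce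
            rw [hm]
            have h1 : ‖c * e (m+1) + d * e m‖
                ≤ ‖c‖ * ‖e (m+1)‖ + (w n)⁻¹ * ‖e m‖ := by
              refine (norm_add_le _ _).trans ?_
              rw [norm_mul, norm_mul, habs_d]
            refine h1.trans ?_
            have hb1 : ‖c‖ * ‖e (m+1)‖
                ≤ γ n * (κ ^ (m+1) * D ^ (m+1) * Γ) :=
              mul_le_mul (hcγ n) (hbd (m+1)) (norm_nonneg _) (hγ n).le
            have hb2 : (w n)⁻¹ * ‖e m‖
                ≤ (w n)⁻¹ * (κ ^ m * D ^ m * Γ) :=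
              mul_le_mul_of_nonneg_left (hbd m) hdR
            refine (add_le_add hb1 hb2).trans ?_
            have hpow : D ^ (m+1) + (w n)⁻¹ * D ^ m ≤ (D + (w n)⁻¹) ^ (m+1) := by
              have h3 : (D + (w n)⁻¹) ^ (m+1) = (D + (w n)⁻¹) ^ m * (D + (w n)⁻¹) := pow_succ _ _
              have h4 : D ^ m * (D + (w n)⁻¹) ≤ (D + (w n)⁻¹) ^ m * (D + (w n)⁻¹) := by
                apply mul_le_mul_of_nonneg_right _ (by linarith)
                exact pow_le_pow_left₀ hD (by linarith) m
              have h5 : D ^ m * (D + (w n)⁻¹) = D ^ (m+1) + D ^ m * (w n)⁻¹ := by ring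
              rw [h3]; nlinarith [h4, h5]
            have hγn : 0 < γ n := hγ n
            have hκγn : 1 ≤ κ * γ n := hκγ n
            -- goal: γ n * (κ^(m+1) D^(m+1) Γ) + w⁻¹ (κ^m D^m Γ) ≤ κ^(m+1) (D+w⁻¹)^(m+1) (Γ γ n)
            have hmain : γ n * (κ ^ (m+1) * D ^ (m+1) * Γ) + (w n)⁻¹ * (κ ^ m * D ^ m * Γ)
                ≤ κ ^ (m+1) * (D ^ (m+1) + (w n)⁻¹ * D ^ m) * (Γ * γ n) := by
              have hA : γ n * (κ ^ (m+1) * D ^ (m+1) * Γ)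
                  = κ ^ (m+1) * D ^ (m+1) * (Γ * γ n) := by ring
              have hB : (w n)⁻¹ * (κ ^ m * D ^ m * Γ)
                  ≤ κ ^ (m+1) * ((w n)⁻¹ * D ^ m) * (Γ * γ n) := by
                have : κ ^ m * 1 ≤ κ ^ m * (κ * γ n) := by
                  apply mul_le_mul_of_nonneg_left hκγn (pow_nonneg hκpos.le m)
                have h6 : κ ^ m ≤ κ ^ (m+1) * γ n := by
                  rw [pow_succ]; nlinarith [this]
                calc (w n)⁻¹ * (κ ^ m * D ^ m * Γ)
                    = κ ^ m * ((w n)⁻¹ * D ^ m * Γ) := by ring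
                  _ ≤ (κ ^ (m+1) * γ n) * ((w n)⁻¹ * D ^ m * Γ) := by
                      apply mul_le_mul_of_nonneg_right h6
                      positivity
                  _ = κ ^ (m+1) * ((w n)⁻¹ * D ^ m) * (Γ * γ n) := by ring
              linarith [hA, hB]
            refine hmain.trans ?_
            apply mul_le_mul_of_nonneg_right _ (by positivity)
            apply mul_le_mul_of_nonneg_left hpow (by positivity)


/-- The constant `U` controlling `|Σ 1/ω_k - log(n/l)/b|`. -/
def Uconst (b w0 : ℝ) : ℝ := Real.log (1 + w0 / b) + Real.log (2 + b / w0)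

lemma Uconst_nonneg {b w0 : ℝ} (hb : 0 < b) (hw0 : 0 < w0) : 0 ≤ Uconst b w0 := by
  have d1 := (div_pos hw0 hb).le
  have d2 := (div_pos hb hw0).le
  have h1 : (0:ℝ) ≤ Real.log (1 + w0 / b) := Real.log_nonneg (by linarith)
  have h2 : (0:ℝ) ≤ Real.log (2 + b / w0) := Real.log_nonneg (by linarith)
  rw [Uconst]
  linarith

section omegaBounds
variable {b w0 : ℝ} (hb : 0 < b) (hw0 : 0 < w0) {l n : ℕ} (hl : 1 ≤ l) (hln : l ≤ n)

lemma omega_pos (hb : 0 < b) (hw0 : 0 < w0) (k : ℕ) : 0 < w0 + (k:ℝ) * b := by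
  have := mul_nonneg (Nat.cast_nonneg (α := ℝ) k) hb.le
  linarith

include hb hw0 hl hln

lemma sum_omega_inv_eq :
    ∑ k ∈ Finset.Ico l n, (w0 + (k:ℝ) * b)⁻¹
      = b⁻¹ * ∑ k ∈ Finset.Ico l n, ((k:ℝ) + w0 / b)⁻¹ := by
  rw [Finset.mul_sum]
  refine Finset.sum_congr rfl fun k _ => ?_
  rw [← mul_inv]
  congr 1
  field_simp
  ring

lemma sum_omega_inv_le :
    ∑ k ∈ Finset.Ico l n, (w0 + (k:ℝ) * b)⁻¹
      ≤ (Real.log ((n:ℝ) / l) + Uconst b w0) / b := by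
  set c := w0 / b with hc
  have hc0 : 0 < c := by positivity
  have hl0 : (0:ℝ) < l := by exact_mod_cast hl
  have hn0 : (0:ℝ) < n := by exact_mod_cast hl.trans hln
  have hl1 : (1:ℝ) ≤ (l:ℝ) := by exact_mod_cast hl
  have hln' : (l:ℝ) ≤ (n:ℝ) := by exact_mod_cast hln
  rw [sum_omega_inv_eq hb hw0 hl hln]
  have h1 := sum_inv_le c hc0 hl hln
  have h2 : Real.log ((n:ℝ) - 1 + c) ≤ Real.log (n:ℝ) + Real.log (1 + c) := by
    rw [← Real.log_mul (ne_of_gt hn0) (by positivity)]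
    apply Real.log_le_log (by linarith)
    nlinarith
  have h3 : Real.log (l:ℝ) - Real.log (2 + c⁻¹) ≤ Real.log ((l:ℝ) - 1 + c) := by
    have hpos : (0:ℝ) < (l:ℝ) - 1 + c := by linarith
    have hkey : (l:ℝ) ≤ ((l:ℝ) - 1 + c) * (2 + c⁻¹) := by
      have e1 : ((l:ℝ) - 1 + c) * (2 + c⁻¹)
          = 2*((l:ℝ)-1) + ((l:ℝ)-1)*c⁻¹ + 2*c + 1 := by
        field_simp
        ring
      have e2 : (0:ℝ) ≤ ((l:ℝ)-1)*c⁻¹ := by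
        apply mul_nonneg (by linarith) (by positivity)
      nlinarith
    have := Real.log_le_log hl0 hkey
    rw [Real.log_mul (ne_of_gt hpos) (by positivity)] at this
    linarith
  have h4 : Real.log ((n:ℝ)/l) = Real.log (n:ℝ) - Real.log (l:ℝ) :=
    Real.log_div (ne_of_gt hn0) (ne_of_gt hl0)
  have hU : Uconst b w0 = Real.log (1+c) + Real.log (2+c⁻¹) := by
    rw [Uconst, hc, inv_div]
  have hS : ∑ k ∈ Finset.Ico l n, ((k:ℝ) + c)⁻¹ ≤ Real.log ((n:ℝ)/l) + Uconst b w0 := by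
    rw [h4, hU]
    linarith
  calc b⁻¹ * ∑ k ∈ Finset.Ico l n, ((k:ℝ) + c)⁻¹
      ≤ b⁻¹ * (Real.log ((n:ℝ)/l) + Uconst b w0) := by
        apply mul_le_mul_of_nonneg_left hS (by positivity)
    _ = (Real.log ((n:ℝ)/l) + Uconst b w0) / b := by
        ring

lemma le_sum_omega_inv :
    (Real.log ((n:ℝ) / l) - Uconst b w0) / b
      ≤ ∑ k ∈ Finset.Ico l n, (w0 + (k:ℝ) * b)⁻¹ := by
  set c := w0 / b with hc
  have hc0 : 0 < c := by rw [hc]; positivity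
  have hl0 : (0:ℝ) < l := by exact_mod_cast hl
  have hn0 : (0:ℝ) < n := by exact_mod_cast hl.trans hln
  have hl1 : (1:ℝ) ≤ (l:ℝ) := by exact_mod_cast hl
  rw [sum_omega_inv_eq hb hw0 hl hln]
  have h1 := le_sum_inv c hc0 hl hln
  have h2 : Real.log (n:ℝ) ≤ Real.log ((n:ℝ) + c) := Real.log_le_log hn0 (by linarith)
  have h3 : Real.log ((l:ℝ) + c) ≤ Real.log (l:ℝ) + Real.log (1 + c) := by
    rw [← Real.log_mul (ne_of_gt hl0) (by positivity)]
    apply Real.log_le_log (by positivity)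
    nlinarith
  have hci : (0:ℝ) < c⁻¹ := inv_pos.mpr hc0
  have h5 : (0:ℝ) ≤ Real.log (2 + c⁻¹) := Real.log_nonneg (by linarith)
  have h4 : Real.log ((n:ℝ)/l) = Real.log (n:ℝ) - Real.log (l:ℝ) :=
    Real.log_div (ne_of_gt hn0) (ne_of_gt hl0)
  have hU : Uconst b w0 = Real.log (1+c) + Real.log (2+c⁻¹) := by
    rw [Uconst, hc, inv_div]
  have hS : Real.log ((n:ℝ)/l) - Uconst b w0 ≤ ∑ k ∈ Finset.Ico l n, ((k:ℝ) + c)⁻¹ := by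
    rw [h4, hU]
    linarith
  calc (Real.log ((n:ℝ)/l) - Uconst b w0) / b
      = b⁻¹ * (Real.log ((n:ℝ)/l) - Uconst b w0) := by ring
    _ ≤ b⁻¹ * ∑ k ∈ Finset.Ico l n, ((k:ℝ) + c)⁻¹ :=
        mul_le_mul_of_nonneg_left hS (by positivity)

lemma sum_omega_inv_sq_le :
    ∑ k ∈ Finset.Ico l n, ((w0 + (k:ℝ) * b)⁻¹) ^ 2 ≤ 2 / b ^ 2 := by
  set c := w0 / b with hc
  have hc0 : 0 < c := by rw [hc]; positivity
  have heq : ∀ k : ℕ, ((w0 + (k:ℝ) * b)⁻¹) ^ 2 = b⁻¹ ^ 2 * (((k:ℝ) + c)⁻¹) ^ 2 := by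
    intro k
    rw [← mul_pow]
    congr 1
    rw [← mul_inv]
    congr 1
    rw [hc]
    field_simp
    ring
  calc ∑ k ∈ Finset.Ico l n, ((w0 + (k:ℝ) * b)⁻¹) ^ 2
      = b⁻¹ ^ 2 * ∑ k ∈ Finset.Ico l n, (((k:ℝ) + c)⁻¹) ^ 2 := by
        rw [Finset.mul_sum]
        exact Finset.sum_congr rfl fun k _ => heq k
    _ ≤ b⁻¹ ^ 2 * 2 := by
        apply mul_le_mul_of_nonneg_left (sum_inv_sq_le c hc0 hl hln) (by positivity)
    _ = 2 / b ^ 2 := by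
        rw [inv_pow]
        ring

end omegaBounds

/-- The per-eigenvalue constant in Lemma 6.1. -/
def Cconst (A P : Matrix (Fin q) (Fin q) ℂ) (μ : ℂ) (b w0 : ℝ) : ℝ :=
  (∑ j ∈ Finset.range (nuOf A μ + 1),
      opNorm ((A - μ • 1) ^ j * P) *
        (max 1 (Real.exp (‖μ‖ / w0) * ((1 + Uconst b w0) / b))) ^ nuOf A μ) *
    Real.exp (|μ.re| * Uconst b w0 / b + ‖μ‖ ^ 2 / b ^ 2)

set_option maxHeartbeats 1000000 in
lemma per_lambda (A P : Matrix (Fin q) (Fin q) ℂ) (μ : ℂ) {b w0 : ℝ}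
    (hb : 0 < b) (hw0 : 0 < w0)
    (hP : IsSpectralProjection A μ P) {l n : ℕ} (hl : 1 ≤ l) (hln : l ≤ n) :
    opNorm (P * FprodC A (fun k => w0 + k * b) l n) ≤
      Cconst A P μ b w0 * ((n:ℝ)/l) ^ (μ.re / b) *
        (1 + Real.log ((n:ℝ)/l)) ^ nuOf A μ := by
  set ν := nuOf A μ with hν
  set w : ℕ → ℝ := fun k => w0 + k * b with hwdef
  have hwpos : ∀ k, 0 < w k := fun k => omega_pos hb hw0 k
  set κ := Real.exp (‖μ‖ / w0) with hκdef
  have hκ : 1 ≤ κ := Real.one_le_exp (by positivity)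
  set γ : ℕ → ℝ := fun k => Real.exp (μ.re * (w k)⁻¹ + ‖μ‖ ^ 2 / 2 * ((w k)⁻¹) ^ 2) with hγdef
  have hγ : ∀ k, 0 < γ k := fun k => Real.exp_pos _
  have hcγ : ∀ k, ‖1 + ((w k : ℂ))⁻¹ * μ‖ ≤ γ k := by
    intro k
    refine (abs_one_add_le _).trans (le_of_eq ?_)
    have hre : (((w k : ℝ) : ℂ)⁻¹ * μ).re = (w k)⁻¹ * μ.re := by
      rw [← Complex.ofReal_inv, Complex.re_ofReal_mul]
    have hnorm : ‖((w k : ℝ) : ℂ)⁻¹ * μ‖ = (w k)⁻¹ * ‖μ‖ := by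
      rw [norm_mul, norm_inv, Complex.norm_real, Real.norm_eq_abs,
        abs_of_pos (hwpos k)]
    rw [hre, hnorm]
    congr 1
    ring
  have hκγ : ∀ k, 1 ≤ κ * γ k := by
    intro k
    rw [hκdef, ← Real.exp_add]
    apply Real.one_le_exp
    have h1 : (w k)⁻¹ ≤ w0⁻¹ := by
      apply inv_anti₀ hw0
      have : (0:ℝ) ≤ (k:ℝ) * b := mul_nonneg (Nat.cast_nonneg k) hb.le
      simp only [hwdef]
      linarith
    have h2 : |μ.re| ≤ ‖μ‖ := Complex.abs_re_le_norm μ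
    have h2' : -‖μ‖ ≤ μ.re := by linarith [neg_abs_le μ.re]
    have h3 : -(‖μ‖ * (w k)⁻¹) ≤ μ.re * (w k)⁻¹ := by
      rw [← neg_mul]
      exact mul_le_mul_of_nonneg_right h2' (inv_pos.mpr (hwpos k)).le
    have h4 : ‖μ‖ * (w k)⁻¹ ≤ ‖μ‖ * w0⁻¹ := mul_le_mul_of_nonneg_left h1 (norm_nonneg μ)
    have h5 : (0:ℝ) ≤ ‖μ‖ ^ 2 / 2 * ((w k)⁻¹) ^ 2 := by positivity
    have h6 : ‖μ‖ / w0 = ‖μ‖ * w0⁻¹ := div_eq_mul_inv _ _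
    linarith
  obtain ⟨e, hrep, hbd⟩ := key_repr A P μ ν (proj_comm hP) (nil_of_proj hP)
    w hwpos γ hγ hcγ κ hκγ hκ l n hln
  set D := ∑ k ∈ Finset.Ico l n, (w k)⁻¹ with hD
  set Γ := ∏ k ∈ Finset.Ico l n, γ k with hΓ
  set U := Uconst b w0 with hU
  have hU0 : 0 ≤ U := Uconst_nonneg hb hw0
  set t := (n:ℝ) / l with ht
  have hl0 : (0:ℝ) < l := by exact_mod_cast hl
  have hn0 : (0:ℝ) < n := by exact_mod_cast hl.trans hln
  have ht0 : 0 < t := by rw [ht]; positivity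
  have ht1 : 1 ≤ t := by
    rw [ht, le_div_iff₀ hl0, one_mul]
    exact_mod_cast hln
  set L := Real.log t with hL
  have hL0 : 0 ≤ L := Real.log_nonneg ht1
  set K := |μ.re| * U / b + ‖μ‖ ^ 2 / b ^ 2 with hK
  -- bound on Γ
  have hS1u : D ≤ (L + U) / b := sum_omega_inv_le hb hw0 hl hln
  have hS1l : (L - U) / b ≤ D := le_sum_omega_inv hb hw0 hl hln
  have hS2 : ∑ k ∈ Finset.Ico l n, ((w k)⁻¹) ^ 2 ≤ 2 / b ^ 2 :=
    sum_omega_inv_sq_le hb hw0 hl hln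
  have hΓexp : Γ = Real.exp (μ.re * D + ‖μ‖ ^ 2 / 2 * ∑ k ∈ Finset.Ico l n, ((w k)⁻¹) ^ 2) := by
    rw [hΓ, hγdef, ← Real.exp_sum]
    congr 1
    rw [Finset.sum_add_distrib, hD, Finset.mul_sum, Finset.mul_sum]
  have hre_bound : μ.re * D ≤ μ.re / b * L + |μ.re| * U / b := by
    rcases le_or_gt 0 μ.re with hsgn | hsgn
    · have := mul_le_mul_of_nonneg_left hS1u hsgn
      rw [abs_of_nonneg hsgn]
      calc μ.re * D ≤ μ.re * ((L + U) / b) := this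
        _ = μ.re / b * L + μ.re * U / b := by ring
    · have := mul_le_mul_of_nonpos_left hS1l hsgn.le
      rw [abs_of_neg hsgn]
      calc μ.re * D ≤ μ.re * ((L - U) / b) := this
        _ = μ.re / b * L + -μ.re * U / b := by ring
  have hsq_bound : ‖μ‖ ^ 2 / 2 * ∑ k ∈ Finset.Ico l n, ((w k)⁻¹) ^ 2 ≤ ‖μ‖ ^ 2 / b ^ 2 := by
    calc ‖μ‖ ^ 2 / 2 * ∑ k ∈ Finset.Ico l n, ((w k)⁻¹) ^ 2
        ≤ ‖μ‖ ^ 2 / 2 * (2 / b ^ 2) := by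
          apply mul_le_mul_of_nonneg_left hS2 (by positivity)
      _ = ‖μ‖ ^ 2 / b ^ 2 := by ring
  have hΓle : Γ ≤ t ^ (μ.re / b) * Real.exp K := by
    rw [hΓexp, Real.rpow_def_of_pos ht0, ← Real.exp_add]
    apply Real.exp_le_exp.mpr
    rw [hK]
    have : Real.log t * (μ.re / b) = μ.re / b * L := by rw [hL]; ring
    rw [this]
    linarith
  have hΓ0 : 0 ≤ Γ := by
    rw [hΓexp]; positivity
  -- bound on κ^j D^j
  set β := max 1 (κ * ((1 + U) / b)) with hβ
  have hβ1 : 1 ≤ β := le_max_left _ _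
  have hD0 : 0 ≤ D := by
    rw [hD]
    exact Finset.sum_nonneg fun k _ => (inv_pos.mpr (hwpos k)).le
  have hDle : D ≤ (1 + U) / b * (1 + L) := by
    have hnum : L + U ≤ (1 + U) * (1 + L) := by nlinarith [mul_nonneg hU0 hL0]
    calc D ≤ (L + U) / b := hS1u
      _ ≤ ((1 + U) * (1 + L)) / b := by gcongr
      _ = (1 + U) / b * (1 + L) := by ring
  have hκD : ∀ j, j < ν + 1 → κ ^ j * D ^ j ≤ β ^ ν * (1 + L) ^ ν := by
    intro j hj
    have h1 : κ ^ j * D ^ j = (κ * D) ^ j := (mul_pow _ _ _).symm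
    have hκD0 : 0 ≤ κ * D := mul_nonneg (by linarith) hD0
    have h2 : κ * D ≤ β * (1 + L) := by
      calc κ * D ≤ κ * ((1 + U) / b * (1 + L)) :=
            mul_le_mul_of_nonneg_left hDle (by linarith)
        _ = κ * ((1 + U) / b) * (1 + L) := by ring
        _ ≤ β * (1 + L) := by
            apply mul_le_mul_of_nonneg_right (le_max_right _ _) (by linarith)
    calc κ ^ j * D ^ j = (κ * D) ^ j := h1
      _ ≤ (β * (1 + L)) ^ j := pow_le_pow_left₀ hκD0 h2 j
      _ ≤ (β * (1 + L)) ^ ν := by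
          have hb1L : (1:ℝ) ≤ β * (1 + L) := by nlinarith
          exact pow_le_pow_right₀ hb1L (by omega)
      _ = β ^ ν * (1 + L) ^ ν := mul_pow _ _ _
  -- final chain
  rw [opNorm_eq, hrep]
  calc ‖∑ j ∈ Finset.range (ν + 1), e j • ((A - μ • 1) ^ j * P)‖
      ≤ ∑ j ∈ Finset.range (ν + 1), ‖e j‖ * ‖(A - μ • 1) ^ j * P‖ := by
        refine (norm_sum_le _ _).trans (le_of_eq ?_)
        refine Finset.sum_congr rfl fun j _ => ?_
        rw [norm_smul]
    _ ≤ ∑ j ∈ Finset.range (ν + 1), (κ ^ j * D ^ j * Γ) * ‖(A - μ • 1) ^ j * P‖ := by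
        refine Finset.sum_le_sum fun j _ => ?_
        exact mul_le_mul_of_nonneg_right (hbd j) (norm_nonneg _)
    _ ≤ ∑ j ∈ Finset.range (ν + 1),
          (β ^ ν * (1 + L) ^ ν * (t ^ (μ.re / b) * Real.exp K)) * ‖(A - μ • 1) ^ j * P‖ := by
        refine Finset.sum_le_sum fun j hj => ?_
        apply mul_le_mul_of_nonneg_right _ (norm_nonneg _)
        apply mul_le_mul (hκD j (Finset.mem_range.mp hj)) hΓle hΓ0
        positivity
    _ = (∑ j ∈ Finset.range (ν + 1), ‖(A - μ • 1) ^ j * P‖ * β ^ ν) *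
          Real.exp K * t ^ (μ.re / b) * (1 + L) ^ ν := by
        rw [← Finset.mul_sum, ← Finset.sum_mul]
        ring
    _ = Cconst A P μ b w0 * t ^ (μ.re / b) * (1 + L) ^ ν := by
        rw [Cconst]
        have : ∑ j ∈ Finset.range (ν + 1), opNorm ((A - μ • 1) ^ j * P) *
            (max 1 (Real.exp (‖μ‖ / w0) * ((1 + Uconst b w0) / b))) ^ nuOf A μ
            = ∑ j ∈ Finset.range (ν + 1), ‖(A - μ • 1) ^ j * P‖ * β ^ ν := by
          refine Finset.sum_congr rfl fun j _ => ?_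
          rw [opNorm_eq, hβ, hκdef, hU, hν]
        rw [this, hK, hU]


end Lem61

/-- **Lemma 6.1 (Janson).** Let `A` be a real `q×q` matrix with a real eigenvalue `b > 0`
dominating the real parts of all eigenvalues, and let `ω_k = ω₀ + k b` with `ω₀ > 0` and
`F_{ℓ,n} = ∏_{ℓ ≤ k < n} (I + ω_k⁻¹ A)`.  Then there is a constant `C` such that for every
eigenvalue `λ` of `A` and all `1 ≤ ℓ ≤ n`,
`‖P_λ F_{ℓ,n}‖ ≤ C (n/ℓ)^{Re λ/b} (1 + log (n/ℓ))^{ν_λ}`. -/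
theorem opNorm_spectral_projection_Fprod
    {q : ℕ} (A : Matrix (Fin q) (Fin q) ℝ) (b : ℝ) (hb : 0 < b)
    (hspec : LambdaOneIs (A.map Complex.ofReal) b)
    (w0 : ℝ) (hw0 : 0 < w0) :
    ∃ C : ℝ, 0 < C ∧
      ∀ lam ∈ spectrum ℂ (A.map Complex.ofReal),
      ∀ Pm : Matrix (Fin q) (Fin q) ℂ,
        IsSpectralProjection (A.map Complex.ofReal) lam Pm →
      ∀ l n : ℕ, 1 ≤ l → l ≤ n →
        opNorm (Pm * FprodC (A.map Complex.ofReal) (fun k => w0 + k * b) l n) ≤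
          C * ((n : ℝ) / l) ^ (lam.re / b) *
            (1 + Real.log ((n : ℝ) / l)) ^ nuOf (A.map Complex.ofReal) lam := by
  classical
  set A' := A.map Complex.ofReal with hA'
  have hfin : (spectrum ℂ A').Finite := Matrix.finite_spectrum A'
  set Cfun : ℂ → ℝ := fun lam =>
    if h : ∃ P, IsSpectralProjection A' lam P
    then Lem61.Cconst A' h.choose lam b w0 else 0 with hCfun
  refine ⟨1 + ∑ lam ∈ hfin.toFinset, max 0 (Cfun lam), ?_, ?_⟩
  · have : (0:ℝ) ≤ ∑ lam ∈ hfin.toFinset, max 0 (Cfun lam) :=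
      Finset.sum_nonneg fun lam _ => le_max_left 0 _
    linarith
  · intro lam hlam Pm hPm l n hl hln
    have hEx : ∃ P, IsSpectralProjection A' lam P := ⟨Pm, hPm⟩
    have hch : hEx.choose = Pm := Lem61.proj_unique hEx.choose_spec hPm
    have hper := Lem61.per_lambda A' Pm lam hb hw0 hPm hl hln
    refine hper.trans ?_
    have hle : Lem61.Cconst A' Pm lam b w0
        ≤ 1 + ∑ lam ∈ hfin.toFinset, max 0 (Cfun lam) := by
      have h1 : Cfun lam = Lem61.Cconst A' Pm lam b w0 := by
        rw [hCfun]
        simp only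
        rw [dif_pos hEx, hch]
      have h2 : max 0 (Cfun lam) ≤ ∑ lam ∈ hfin.toFinset, max 0 (Cfun lam) :=
        Finset.single_le_sum (f := fun lam => max 0 (Cfun lam))
          (fun _ _ => le_max_left 0 _) (hfin.mem_toFinset.mpr hlam)
      have h3 : Cfun lam ≤ max 0 (Cfun lam) := le_max_right _ _
      linarith
    have hl0 : (0:ℝ) < l := by exact_mod_cast hl
    have hn0 : (0:ℝ) < n := by exact_mod_cast hl.trans hln
    have ht0 : (0:ℝ) < (n:ℝ) / l := by positivity
    have ht1 : (1:ℝ) ≤ (n:ℝ) / l := by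
      rw [le_div_iff₀ hl0, one_mul]
      exact_mod_cast hln
    have hpos1 : (0:ℝ) < ((n:ℝ)/l) ^ (lam.re / b) := Real.rpow_pos_of_pos ht0 _
    have hpos2 : (0:ℝ) ≤ (1 + Real.log ((n:ℝ)/l)) ^ nuOf A' lam := by
      have := Real.log_nonneg ht1
      positivity
    exact mul_le_mul_of_nonneg_right
      (mul_le_mul_of_nonneg_right hle hpos1.le) hpos2
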